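/- arXiv:1409.3533 — 2 statements merged into one kernel-verified Lean document; each statement's English description precedes it below -/
import Mathlib

section
/- In an OK-program's call graph, the set of action nodes reachable from the entry point through the session interface after activating role r is contained in the set of actions permitted to r by the policy. -/
/-- Vertex classification for the session/role/resource/other partition. -/
inductive GKind (Role : Type) : Type
  | session
  | roleClass (r : Role)
  | resourceAction
  | other

/-- In an OK-program's call graph, with role `r` activated, the set of action
nodes reachable from the session entry point is contained in the set of actions
permitted to `r` by the policy. -/
theorem ok_program_reachable_actions_permitted
    {V Role : Type} [Fintype Role]
    (kind : V → GKind Role)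
    (E : V → V → Prop)
    (allow : Role → V → Prop)
    (r : Role)
    (e : V) (hentry : kind e = GKind.session)
    -- from session, only session, the activated role's classes, and other are reachable
    (hSession : ∀ u v, E u v → kind u = GKind.session →
      kind v = GKind.session ∨ kind v = GKind.roleClass r ∨ kind v = GKind.other)
    -- role classes call actions only when permitted
    (hRoleAct : ∀ u v (r' : Role), E u v → kind u = GKind.roleClass r' →
      kind v = GKind.resourceAction → allow r' v)
    -- role classes never call role classes of another role
    (hRoleRole : ∀ u v (r1 r2 : Role), E u v → kind u = GKind.roleClass r1 →
      kind v = GKind.roleClass r2 → r1 = r2)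
    -- other classes have no edges to role, action, or session classes
    (hOther : ∀ u v, E u v → kind u = GKind.other → kind v = GKind.other)
    -- action vertices are sinks for the analysis
    (hSink : ∀ u v, kind u = GKind.resourceAction → ¬ E u v) :
    ∀ a : V, Relation.ReflTransGen E e a → kind a = GKind.resourceAction →
      allow r a := by
  have key : ∀ a : V, Relation.ReflTransGen E e a →
      kind a = GKind.session ∨ kind a = GKind.roleClass r ∨ kind a = GKind.other ∨
        (kind a = GKind.resourceAction ∧ allow r a) := by
    intro a h
    induction h with
    | refl => exact Or.inl hentry
    | tail hb hedge ih =>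
      rename_i b c
      rcases ih with h1 | h1 | h1 | ⟨h1, _⟩
      · rcases hSession b c hedge h1 with h2 | h2 | h2
        · exact Or.inl h2
        · exact Or.inr (Or.inl h2)
        · exact Or.inr (Or.inr (Or.inl h2))
      · cases h2 : kind c with
        | session =>
          -- role class edges to session: not excluded? need to check
          exact Or.inl rfl
        | roleClass r2 =>
          have := hRoleRole b c r r2 hedge h1 h2
          subst this; exact Or.inr (Or.inl rfl)
        | resourceAction =>
          exact Or.inr (Or.inr (Or.inr ⟨rfl, hRoleAct b c r hedge h1 h2⟩))
        | other => exact Or.inr (Or.inr (Or.inl rfl))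
      · exact Or.inr (Or.inr (Or.inl (hOther b c hedge h1)))
      · exact absurd hedge (hSink b c h1)
  intro a h ha
  rcases key a h with h1 | h1 | h1 | ⟨_, h2⟩ <;>
    first | exact h2 | (rw [ha] at h1; cases h1)
end

section
/- Role isolation: in an OK-program, there is no call path from a role class of role r1 to a role class of a different role r2 that does not pass through a session class; combined with the OK-condition that resource and other classes never call role classes, any path between role classes of distinct roles must contain a session-class vertex. -/
/-- Vertex classification for role isolation. -/
inductive IKind (Role : Type) : Type
  | session
  | roleClass (r : Role)
  | resource
  | other

/-- Role isolation: in an OK-program's call graph — where role classes have no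
edges to other roles' classes, and resource and other classes have no edges to
any role class (only session classes may call role classes of arbitrary roles)
— every path from a role class of `r1` to a role class of `r2` with `r1 ≠ r2`
contains a session-class vertex. -/
theorem ok_program_role_isolation
    {V Role : Type}
    (kind : V → IKind Role)
    (E : V → V → Prop)
    -- role classes never call role classes of a different role
    (hRoleRole : ∀ u v (r r' : Role), E u v → kind u = IKind.roleClass r →
      kind v = IKind.roleClass r' → r = r')
    -- resource classes have no edges to role classes
    (hResRole : ∀ u v (r : Role), E u v → kind u = IKind.resource →
      kind v ≠ IKind.roleClass r)
    -- other classes have no edges to role classes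
    (hOtherRole : ∀ u v (r : Role), E u v → kind u = IKind.other →
      kind v ≠ IKind.roleClass r) :
    ∀ (r1 r2 : Role), r1 ≠ r2 →
      ∀ (p : List V), p.Chain' E →
        (∀ u, p.head? = some u → kind u = IKind.roleClass r1) →
        (∀ v, p.getLast? = some v → kind v = IKind.roleClass r2) →
        p ≠ [] →
        ∃ v ∈ p, kind v = IKind.session := by
  intro r1 r2 hne p hchain hhead hlast hnil
  by_contra hcon
  push_neg at hcon
  have key : ∀ (q : List V), q.Chain' E → (∀ v ∈ q, kind v ≠ IKind.session) →
      (∀ w, q.getLast? = some w → kind w = IKind.roleClass r2) →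
      ∀ u, q.head? = some u → kind u = IKind.roleClass r2 := by
    intro q
    induction q with
    | nil => intro _ _ _ u hu; simp at hu
    | cons a t ih =>
      intro hch hns hlast' u hu
      simp only [List.head?_cons, Option.some.injEq] at hu
      subst hu
      cases t with
      | nil => exact hlast' a rfl
      | cons b t' =>
        have hch' := List.isChain_cons_cons.mp hch
        have hb := ih hch'.2 (fun v hv => hns v (List.mem_cons_of_mem _ hv))
          (fun w hw => hlast' w (by simpa [List.getLast?_cons_cons] using hw)) b rfl
        have hE := hch'.1
        cases hk : kind a with
        | session => exact absurd hk (hns a (List.mem_cons_self))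
        | roleClass r => exact congrArg IKind.roleClass (hRoleRole a b r r2 hE hk hb)
        | resource => exact absurd hb (hResRole a b r2 hE hk)
        | other => exact absurd hb (hOtherRole a b r2 hE hk)
  cases p with
  | nil => exact hnil rfl
  | cons a t =>
    have h1 := hhead a rfl
    have h2 := key (a :: t) hchain hcon hlast a rfl
    rw [h1] at h2
    exact hne (by injection h2)
end
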